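/- Let mu >= 2 and 1 <= nu < mu. Let u_1,...,u_mu and a_1,...,a_mu be nonzero real numbers and let lambda_1,...,lambda_mu be real numbers. Let M be the mu x mu real matrix defined as follows: for each row i = 1,...,mu-1, M_{i,1} = -1/u_1, M_{i,i+1} = 1/u_{i+1} if i+1 <= nu and M_{i,i+1} = -1/u_{i+1} if i+1 > nu, and all other entries of row i are zero; and the last row is M_{mu,l} = -lambda_l/(u_l a_l) for l = 1,...,mu. Then det M = ((-1)^{nu+1} / Prod_{l=1}^{mu} u_l) * ( - Sum_{l=1}^{nu} lambda_l/a_l + Sum_{l=nu+1}^{mu} lambda_l/a_l ). In particular, if u_l > 0 and a_l > 0 for all l, lambda_l < 0 for l <= nu, and lambda_l > 0 for l > nu, then det M != 0, so M is invertible. -/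

import Mathlib

/-- Determinant of the junction-condition coefficient matrix.  The matrix `M`
(with `μ ≥ 2` rows/columns, `1 ≤ ν < μ`) has, in each of its first `μ - 1` rows
(Lean row index `i` corresponding to paper row `i+1`), the entry `-1/u₁` in the
first column and `±1/u_{i+2}` in column `i+1` (sign `+` for columns
corresponding to paper indices `≤ ν`, `-` otherwise), and last row
`(-λ_l/(u_l a_l))_l`.  Here `u, a, λ : ℕ → ℝ` are paper-indexed `1, ..., μ`,
so the Lean column `j` corresponds to the paper index `j + 1`. -/
theorem junction_matrix_det
    (μ ν : ℕ) (hμ : 2 ≤ μ) (hν1 : 1 ≤ ν) (hνμ : ν < μ)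
    (u aa lam : ℕ → ℝ)
    (hu : ∀ l, 1 ≤ l → l ≤ μ → u l ≠ 0) (ha : ∀ l, 1 ≤ l → l ≤ μ → aa l ≠ 0)
    (M : Matrix (Fin μ) (Fin μ) ℝ)
    (hM : ∀ i j : Fin μ,
      M i j =
        if (i : ℕ) < μ - 1 then
          (if (j : ℕ) = 0 then -1 / u 1
           else if (j : ℕ) = (i : ℕ) + 1 then
             (if (j : ℕ) + 1 ≤ ν then 1 / u ((j : ℕ) + 1) else -1 / u ((j : ℕ) + 1))
           else 0)
        else -lam ((j : ℕ) + 1) / (u ((j : ℕ) + 1) * aa ((j : ℕ) + 1))) :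
    M.det = ((-1 : ℝ) ^ (ν + 1) / ∏ l ∈ Finset.Icc 1 μ, u l) *
        (-(∑ l ∈ Finset.Icc 1 ν, lam l / aa l)
          + ∑ l ∈ Finset.Icc (ν + 1) μ, lam l / aa l) ∧
    ((∀ l, 1 ≤ l → l ≤ μ → 0 < u l ∧ 0 < aa l) →
      (∀ l, 1 ≤ l → l ≤ ν → lam l < 0) →
      (∀ l, ν < l → l ≤ μ → 0 < lam l) →
      M.det ≠ 0 ∧ IsUnit M) := by
  classical
  obtain ⟨n, hνn, rfl⟩ : ∃ n, ν ≤ n ∧ μ = n + 1 := ⟨μ - 1, by omega, by omega⟩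
  have hn1 : 1 ≤ n := by omega
  set eps : ℕ → ℝ := fun l => if l ≤ ν then 1 else -1 with heps
  -- convenient forms of the matrix entries
  have hMlt : ∀ i j : Fin (n+1), (i:ℕ) < n →
      M i j = if (j:ℕ) = 0 then -1 / u 1
        else if (j:ℕ) = (i:ℕ) + 1 then eps ((j:ℕ)+1) / u ((j:ℕ)+1) else 0 := by
    intro i j hi
    rw [hM, if_pos (by omega)]
    simp only [heps]
    split_ifs <;> simp_all
  have hMlast : ∀ j : Fin (n+1),
      M (Fin.last n) j = -lam ((j:ℕ)+1) / (u ((j:ℕ)+1) * aa ((j:ℕ)+1)) := by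
    intro j
    rw [hM, if_neg (by simp)]
  -- the elementary matrices
  set E : Matrix (Fin (n+1)) (Fin (n+1)) ℝ := fun i j =>
    if i = j then 1 else if i = Fin.last n then
      eps ((j:ℕ)+2) * lam ((j:ℕ)+2) / aa ((j:ℕ)+2) else 0 with hEdef
  set F : Matrix (Fin (n+1)) (Fin (n+1)) ℝ := fun i j =>
    if i = j then 1 else if (j:ℕ) = 0 then
      eps ((i:ℕ)+1) * u ((i:ℕ)+1) / u 1 else 0 with hFdef
  have hEdiag : ∀ i : Fin (n+1), E i i = 1 := by
    intro i; simp [hEdef]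
  have hFdiag : ∀ i : Fin (n+1), F i i = 1 := by
    intro i; simp [hFdef]
  have hEne : ∀ i j : Fin (n+1), i ≠ j → i ≠ Fin.last n → E i j = 0 := by
    intro i j h1 h2; simp only [hEdef]; rw [if_neg h1, if_neg h2]
  have hElast : ∀ j : Fin (n+1), Fin.last n ≠ j →
      E (Fin.last n) j = eps ((j:ℕ)+2) * lam ((j:ℕ)+2) / aa ((j:ℕ)+2) := by
    intro j h1; simp only [hEdef]; rw [if_neg h1]; simp
  have hFne : ∀ i j : Fin (n+1), i ≠ j → (j:ℕ) ≠ 0 → F i j = 0 := by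
    intro i j h1 h2; simp only [hFdef]; rw [if_neg h1, if_neg h2]
  have hF0 : ∀ i : Fin (n+1), i ≠ 0 →
      F i 0 = eps ((i:ℕ)+1) * u ((i:ℕ)+1) / u 1 := by
    intro i h1; simp only [hFdef]; rw [if_neg h1]; simp
  have hdetE : E.det = 1 := by
    rw [Matrix.det_of_lowerTriangular E ?_]
    · simp [hEdiag]
    · intro i j hij
      have h1 : i < j := hij
      exact hEne i j h1.ne (fun h => absurd (h ▸ h1) (LE.le.not_gt (Fin.le_last j : j ≤ Fin.last n)))
  have hdetF : F.det = 1 := by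
    rw [Matrix.det_of_lowerTriangular F ?_]
    · simp [hFdiag]
    · intro i j hij
      have h1 : i < j := hij
      have h2 : (j:ℕ) ≠ 0 := by
        have : (i:ℕ) < (j:ℕ) := h1
        omega
      exact hFne i j h1.ne h2
  set x : ℝ := (E * M) (Fin.last n) 0 with hxdef
  set d : Fin (n+1) → ℝ := fun j =>
    if j = 0 then x else eps ((j:ℕ)+1) / u ((j:ℕ)+1) with hddef
  have hd0 : d 0 = x := by simp [hddef]
  have hdne : ∀ j : Fin (n+1), j ≠ 0 → d j = eps ((j:ℕ)+1) / u ((j:ℕ)+1) := by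
    intro j hj; simp only [hddef]; rw [if_neg hj]
  -- rows of E*M
  have hN1 : ∀ i j : Fin (n+1), (i:ℕ) < n → (E * M) i j = M i j := by
    intro i j hi
    have hiL : i ≠ Fin.last n := by
      intro h; rw [h] at hi; simp at hi
    rw [Matrix.mul_apply, Finset.sum_eq_single i]
    · rw [hEdiag, one_mul]
    · intro k _ hk
      rw [hEne i k (fun h => hk h.symm) hiL, zero_mul]
    · simp
  have hN3 : ∀ j : Fin (n+1), j ≠ 0 → (E * M) (Fin.last n) j = 0 := by
    intro j hj
    have hj0 : (j:ℕ) ≠ 0 := fun h => hj (Fin.ext (by simpa using h))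
    have hjn : (j:ℕ) ≤ n := by omega
    set k0 : Fin (n+1) := ⟨(j:ℕ)-1, by omega⟩ with hk0
    have hk0v : (k0:ℕ) = (j:ℕ) - 1 := rfl
    have hne : k0 ≠ Fin.last n := by
      intro h
      have := congrArg Fin.val h
      rw [hk0v, Fin.val_last] at this
      omega
    rw [Matrix.mul_apply,
      ← Finset.sum_subset (Finset.subset_univ {k0, Fin.last n}) ?_]
    · rw [Finset.sum_pair hne]
      have hjj : (k0:ℕ) + 2 = (j:ℕ) + 1 := by omega
      have hEk0 : E (Fin.last n) k0 =
          eps ((j:ℕ)+1) * lam ((j:ℕ)+1) / aa ((j:ℕ)+1) := by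
        rw [hElast k0 (fun h => hne h.symm), hjj]
      have hMk0 : M k0 j = eps ((j:ℕ)+1) / u ((j:ℕ)+1) := by
        rw [hMlt k0 j (by omega), if_neg hj0, if_pos (by omega)]
      rw [hEk0, hMk0, hEdiag, hMlast j, one_mul]
      have hul : u ((j:ℕ)+1) ≠ 0 := hu _ (by omega) (by omega)
      have hal : aa ((j:ℕ)+1) ≠ 0 := ha _ (by omega) (by omega)
      simp only [heps]
      split_ifs <;> field_simp <;> ring
    · intro k _ hk
      simp only [Finset.mem_insert, Finset.mem_singleton, not_or] at hk
      have hkn : (k:ℕ) < n := by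
        have h1 := k.isLt
        rcases Nat.lt_or_ge (k:ℕ) n with h | h
        · exact h
        · exact absurd (Fin.ext (by rw [Fin.val_last]; omega)) hk.2
      have hkj : (j:ℕ) ≠ (k:ℕ) + 1 := by
        intro h
        exact hk.1 (Fin.ext (by rw [hk0v]; omega))
      rw [hMlt k j hkn, if_neg hj0, if_neg hkj, mul_zero]
  -- columns of (E*M)*F
  have hP1 : ∀ i j : Fin (n+1), j ≠ 0 → (E * M * F) i j = (E * M) i j := by
    intro i j hj
    have hj0 : (j:ℕ) ≠ 0 := fun h => hj (Fin.ext (by simpa using h))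
    rw [Matrix.mul_apply, Finset.sum_eq_single j]
    · rw [hFdiag, mul_one]
    · intro l _ hl
      rw [hFne l j hl hj0, mul_zero]
    · simp
  have hP2 : ∀ i : Fin (n+1), (i:ℕ) < n → (E * M * F) i 0 = 0 := by
    intro i hi
    set i1 : Fin (n+1) := ⟨(i:ℕ)+1, by omega⟩ with hi1
    have hi1v : (i1:ℕ) = (i:ℕ) + 1 := rfl
    have hne : (0 : Fin (n+1)) ≠ i1 := by
      intro h
      have := congrArg Fin.val h
      rw [hi1v] at this
      simp at this
    rw [Matrix.mul_apply,
      ← Finset.sum_subset (Finset.subset_univ {(0 : Fin (n+1)), i1}) ?_]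
    · rw [Finset.sum_pair hne]
      have hF00 : F (0 : Fin (n+1)) 0 = 1 := hFdiag 0
      have hFi1 : F i1 0 = eps ((i:ℕ)+2) * u ((i:ℕ)+2) / u 1 := by
        rw [hF0 i1 (fun h => hne h.symm), hi1v]
      have hM0 : (E * M) i 0 = -1 / u 1 := by
        rw [hN1 i 0 hi, hMlt i 0 hi, if_pos (by simp)]
      have hMi1 : (E * M) i i1 = eps ((i:ℕ)+2) / u ((i:ℕ)+2) := by
        rw [hN1 i i1 hi, hMlt i i1 hi, if_neg (by rw [hi1v]; omega),
          if_pos hi1v, hi1v]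
      rw [hF00, hFi1, hM0, hMi1, mul_one]
      have hu1 : u 1 ≠ 0 := hu 1 le_rfl (by omega)
      have hui : u ((i:ℕ)+2) ≠ 0 := hu _ (by omega) (by omega)
      simp only [heps]
      split_ifs <;> field_simp <;> ring
    · intro l _ hl
      simp only [Finset.mem_insert, Finset.mem_singleton, not_or] at hl
      have hl0 : (l:ℕ) ≠ 0 := fun h => hl.1 (Fin.ext (by simpa using h))
      have hl1 : (l:ℕ) ≠ (i:ℕ)+1 := fun h => hl.2 (Fin.ext (by rw [hi1v]; omega))
      rw [hN1 i l hi, hMlt i l hi, if_neg hl0, if_neg hl1, zero_mul]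
  have hP3 : (E * M * F) (Fin.last n) 0 = x := by
    rw [Matrix.mul_apply, Finset.sum_eq_single (0 : Fin (n+1))]
    · rw [hFdiag, mul_one]
    · intro l _ hl
      rw [hN3 l hl, zero_mul]
    · simp
  -- the product is a permuted diagonal matrix
  have hdiag : E * M * F = (Matrix.diagonal d).submatrix (finRotate (n+1)) id := by
    ext i j
    rw [Matrix.submatrix_apply, id_eq]
    by_cases hi : (i:ℕ) < n
    · have hlt : i < Fin.last n := by
        rw [Fin.lt_iff_val_lt_val, Fin.val_last]; exact hi
      have hrot : ((finRotate (n+1)) i : ℕ) = (i:ℕ) + 1 := by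
        rw [finRotate_succ_apply]
        exact Fin.val_add_one_of_lt hlt
      have hfne : (finRotate (n+1)) i ≠ 0 := by
        intro h
        have := congrArg Fin.val h
        rw [hrot] at this
        simp at this
      by_cases hj : j = 0
      · subst hj
        rw [hP2 i hi, Matrix.diagonal_apply_ne _ hfne]
      · rw [hP1 i j hj, hN1 i j hi, hMlt i j hi,
          if_neg (fun h => hj (Fin.ext (by simpa using h)))]
        by_cases hij : (j:ℕ) = (i:ℕ) + 1
        · have hfj : (finRotate (n+1)) i = j := Fin.ext (by rw [hrot, hij])
          rw [if_pos hij, hfj, Matrix.diagonal_apply_eq, hdne j hj]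
        · have hfj : (finRotate (n+1)) i ≠ j := fun h => hij (by rw [← h, hrot])
          rw [if_neg hij, Matrix.diagonal_apply_ne _ hfj]
    · have hiL : i = Fin.last n := Fin.ext (by rw [Fin.val_last]; have := i.isLt; omega)
      subst hiL
      by_cases hj : j = 0
      · subst hj
        rw [hP3, finRotate_last, Matrix.diagonal_apply_eq, hd0]
      · have hfj : (finRotate (n+1)) (Fin.last n) ≠ j := by
          rw [finRotate_last]; exact fun h => hj h.symm
        rw [hP1 _ j hj, hN3 j hj, Matrix.diagonal_apply_ne _ hfj]
  -- determinant via the permuted diagonal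
  have hdet1 : M.det = (-1:ℝ)^n * ∏ j, d j := by
    have h1 : M.det = (E * M * F).det := by
      rw [Matrix.det_mul, Matrix.det_mul, hdetE, hdetF, one_mul, mul_one]
    rw [h1, hdiag, Matrix.det_permute, Matrix.det_diagonal, sign_finRotate]
    push_cast
    ring
  -- abbreviations for the sums/products
  set A : ℝ := ∑ l ∈ Finset.Ioc 1 ν, lam l / aa l with hA
  set B : ℝ := ∑ l ∈ Finset.Ioc ν (n+1), lam l / aa l with hB
  set Q1 : ℝ := ∏ l ∈ Finset.Ioc 1 ν, u l with hQ1
  set Q2 : ℝ := ∏ l ∈ Finset.Ioc ν (n+1), u l with hQ2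
  have hu1 : u 1 ≠ 0 := hu 1 le_rfl (by omega)
  have ha1 : aa 1 ≠ 0 := ha 1 le_rfl (by omega)
  have hQ1ne : Q1 ≠ 0 := by
    rw [hQ1]
    exact Finset.prod_ne_zero_iff.2 (fun l hl => by
      rw [Finset.mem_Ioc] at hl
      exact hu l (by omega) (by omega))
  have hQ2ne : Q2 ≠ 0 := by
    rw [hQ2]
    exact Finset.prod_ne_zero_iff.2 (fun l hl => by
      rw [Finset.mem_Ioc] at hl
      exact hu l (by omega) (by omega))
  -- reindexing from `range n` to `Ioc 1 (n+1)`
  have hIoc : ∀ f : ℕ → ℝ, ∑ i ∈ Finset.range n, f (i+2) = ∑ l ∈ Finset.Ioc 1 (n+1), f l := by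
    intro f
    rw [← Finset.Ico_add_one_add_one_eq_Ioc, Finset.sum_Ico_eq_sum_range]
    have h : n + 1 + 1 - (1 + 1) = n := by omega
    rw [h]
    exact Finset.sum_congr rfl (fun i _ => by rw [Nat.add_comm]; rfl)
  have hIocP : ∀ f : ℕ → ℝ, ∏ i ∈ Finset.range n, f (i+2) = ∏ l ∈ Finset.Ioc 1 (n+1), f l := by
    intro f
    rw [← Finset.Ico_add_one_add_one_eq_Ioc, Finset.prod_Ico_eq_prod_range]
    have h : n + 1 + 1 - (1 + 1) = n := by omega
    rw [h]
    exact Finset.prod_congr rfl (fun i _ => by rw [Nat.add_comm]; rfl)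
  -- value of x
  have hx : x = -(lam 1)/(u 1 * aa 1) + (A - B) * (-1/u 1) := by
    have hterm : ∀ i : Fin n, E (Fin.last n) i.castSucc * M i.castSucc 0
        = eps ((i:ℕ)+2) * lam ((i:ℕ)+2) / aa ((i:ℕ)+2) * (-1 / u 1) := by
      intro i
      have hcs : (i.castSucc : ℕ) = (i:ℕ) := rfl
      have hlt : (i.castSucc : ℕ) < n := by rw [hcs]; exact i.isLt
      have hneq : Fin.last n ≠ i.castSucc := by
        intro h
        have := congrArg Fin.val h
        rw [Fin.val_last, hcs] at this
        omega
      rw [hElast _ hneq, hMlt _ _ hlt, if_pos (by simp), hcs]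
    have hlastterm : E (Fin.last n) (Fin.last n) * M (Fin.last n) 0
        = -(lam 1)/(u 1 * aa 1) := by
      rw [hEdiag, hMlast, one_mul]
      norm_num
    rw [hxdef, Matrix.mul_apply, Fin.sum_univ_castSucc, hlastterm,
      Finset.sum_congr rfl (fun i _ => hterm i), ← Finset.sum_mul]
    have hsumAB : ∑ i : Fin n, eps ((i:ℕ)+2) * lam ((i:ℕ)+2) / aa ((i:ℕ)+2) = A - B := by
      rw [Fin.sum_univ_eq_sum_range (fun i => eps (i+2) * lam (i+2) / aa (i+2)) n,
        hIoc (fun l => eps l * lam l / aa l),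
        ← Finset.sum_Ioc_consecutive (fun l => eps l * lam l / aa l) hν1 (by omega : ν ≤ n+1)]
      have h1 : ∑ l ∈ Finset.Ioc 1 ν, eps l * lam l / aa l = A := by
        rw [hA]
        refine Finset.sum_congr rfl (fun l hl => ?_)
        rw [Finset.mem_Ioc] at hl
        simp only [heps]
        rw [if_pos hl.2, one_mul]
      have h2 : ∑ l ∈ Finset.Ioc ν (n+1), eps l * lam l / aa l = -B := by
        rw [hB, ← Finset.sum_neg_distrib]
        refine Finset.sum_congr rfl (fun l hl => ?_)
        rw [Finset.mem_Ioc] at hl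
        simp only [heps]
        rw [if_neg (by omega)]
        ring
      rw [h1, h2]
      ring
    rw [hsumAB]
    ring
  -- value of the diagonal product
  have hprod : ∏ j, d j = x * ((-1:ℝ)^(n+1-ν) * (Q1*Q2)⁻¹) := by
    rw [Fin.prod_univ_succ, hd0]
    have hstep : ∀ i : Fin n, d i.succ = eps ((i:ℕ)+2) / u ((i:ℕ)+2) := by
      intro i
      rw [hdne _ (Fin.succ_ne_zero i), Fin.val_succ]
    rw [Finset.prod_congr rfl (fun i _ => hstep i),
      Fin.prod_univ_eq_prod_range (fun i => eps (i+2) / u (i+2)) n,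
      hIocP (fun l => eps l / u l),
      ← Finset.prod_Ioc_consecutive (fun l => eps l / u l) hν1 (by omega : ν ≤ n+1)]
    have h1 : ∏ l ∈ Finset.Ioc 1 ν, eps l / u l = Q1⁻¹ := by
      rw [hQ1, ← Finset.prod_inv_distrib]
      refine Finset.prod_congr rfl (fun l hl => ?_)
      rw [Finset.mem_Ioc] at hl
      simp only [heps]
      rw [if_pos hl.2, one_div]
    have h2 : ∏ l ∈ Finset.Ioc ν (n+1), eps l / u l = (-1:ℝ)^(n+1-ν) * Q2⁻¹ := by
      have hcongr : ∏ l ∈ Finset.Ioc ν (n+1), eps l / u l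
          = ∏ l ∈ Finset.Ioc ν (n+1), (-1 : ℝ) * (u l)⁻¹ := by
        refine Finset.prod_congr rfl (fun l hl => ?_)
        rw [Finset.mem_Ioc] at hl
        simp only [heps]
        rw [if_neg (by omega)]
        ring
      rw [hcongr, Finset.prod_mul_distrib, Finset.prod_const, Nat.card_Ioc,
        Finset.prod_inv_distrib, hQ2]
    rw [h1, h2, mul_inv]
    ring
  -- interval conversions to the `Icc` form of the statement
  have e1 : Finset.Icc 1 ν = Finset.Ioc 0 ν := by
    ext z; simp only [Finset.mem_Icc, Finset.mem_Ioc]; omega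
  have e2 : Finset.Icc (ν+1) (n+1) = Finset.Ioc ν (n+1) := by
    ext z; simp only [Finset.mem_Icc, Finset.mem_Ioc]; omega
  have e3 : Finset.Icc 1 (n+1) = Finset.Ioc 0 (n+1) := by
    ext z; simp only [Finset.mem_Icc, Finset.mem_Ioc]; omega
  have e4 : Finset.Ioc 0 1 = {1} := by
    ext z; simp only [Finset.mem_Ioc, Finset.mem_singleton]; omega
  have hS1 : ∑ l ∈ Finset.Icc 1 ν, lam l / aa l = lam 1 / aa 1 + A := by
    rw [e1, ← Finset.sum_Ioc_consecutive (fun l => lam l / aa l) (Nat.zero_le 1) hν1,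
      e4, Finset.sum_singleton, hA]
  have hS2 : ∑ l ∈ Finset.Icc (ν+1) (n+1), lam l / aa l = B := by
    rw [e2, hB]
  have hPd : ∏ l ∈ Finset.Icc 1 (n+1), u l = u 1 * (Q1 * Q2) := by
    rw [e3, ← Finset.prod_Ioc_consecutive u (Nat.zero_le 1) (by omega : 1 ≤ n+1),
      e4, Finset.prod_singleton,
      ← Finset.prod_Ioc_consecutive u hν1 (by omega : ν ≤ n+1), hQ1, hQ2]
  -- the sign identity
  have hsgn : (-1:ℝ)^(ν+1) = (-1:ℝ)^n * (-1:ℝ)^(n+1-ν) := by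
    obtain ⟨m, hm⟩ : ∃ m, n = ν + m := ⟨n - ν, by omega⟩
    have h1 : n + 1 - ν = m + 1 := by omega
    have key : (-1:ℝ)^(ν+1+2*m) = (-1:ℝ)^(ν+1) := by
      rw [pow_add, pow_mul, neg_one_sq, one_pow, mul_one]
    rw [h1, hm, ← pow_add, show ν + m + (m+1) = ν+1+2*m from by ring]
    exact key.symm
  -- the determinant formula
  have hdetfinal : M.det = ((-1 : ℝ) ^ (ν + 1) / ∏ l ∈ Finset.Icc 1 (n+1), u l) *
      (-(∑ l ∈ Finset.Icc 1 ν, lam l / aa l)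
        + ∑ l ∈ Finset.Icc (ν + 1) (n+1), lam l / aa l) := by
    rw [hdet1, hprod, hx, hS1, hS2, hPd, hsgn]
    field_simp
    ring
  refine ⟨hdetfinal, fun hpos hneg hposl => ?_⟩
  have hPpos : 0 < ∏ l ∈ Finset.Icc 1 (n+1), u l :=
    Finset.prod_pos (fun l hl => (hpos l (Finset.mem_Icc.1 hl).1 (Finset.mem_Icc.1 hl).2).1)
  have hS1n : ∑ l ∈ Finset.Icc 1 ν, lam l / aa l < 0 := by
    have h := Finset.sum_lt_sum_of_nonempty
      (s := Finset.Icc 1 ν) (f := fun l => lam l / aa l) (g := fun _ => (0:ℝ))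
      ⟨1, Finset.mem_Icc.2 ⟨le_rfl, hν1⟩⟩
      (fun l hl => by
        rw [Finset.mem_Icc] at hl
        exact div_neg_of_neg_of_pos (hneg l hl.1 hl.2)
          (hpos l hl.1 (by omega)).2)
    simpa using h
  have hS2p : 0 < ∑ l ∈ Finset.Icc (ν+1) (n+1), lam l / aa l := by
    refine Finset.sum_pos (fun l hl => ?_) ⟨ν+1, Finset.mem_Icc.2 ⟨le_rfl, by omega⟩⟩
    rw [Finset.mem_Icc] at hl
    exact div_pos (hposl l (by omega) hl.2) (hpos l (by omega) hl.2).2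
  have hne0 : M.det ≠ 0 := by
    rw [hdetfinal]
    apply mul_ne_zero
    · exact div_ne_zero (pow_ne_zero _ (by norm_num)) (ne_of_gt hPpos)
    · have h : 0 < -(∑ l ∈ Finset.Icc 1 ν, lam l / aa l)
          + ∑ l ∈ Finset.Icc (ν+1) (n+1), lam l / aa l := by linarith
      exact ne_of_gt h
  exact ⟨hne0, (Matrix.isUnit_iff_isUnit_det M).2 (isUnit_iff_ne_zero.2 hne0)⟩
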